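/- In the total effort exponential model f_i(x) = exp(-Σ_j x_j) with costs 0 < c_1 < ... < c_N and c_1 < 1, the socially optimal profile has x*_1 = -ln(c_1/N) = ln(N/c_1) > 0 and x*_j = 0 for j > 1, and this profile minimizes the social cost N·exp(-Σ_j x_j) + Σ_j c_j x_j over x ⪰ 0. -/

import Mathlib

/-- In the exponential total effort model, the profile with `x*_1 = ln(N/c_1)`
and all other coordinates zero is positive in coordinate 1 and minimizes the
social cost `N·exp(-Σ_j x_j) + Σ_j c_j x_j` over the nonnegative orthant. -/
theorem stmt14 (N : ℕ) (hN : 2 ≤ N)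
    (c : Fin N → ℝ) (hc0 : 0 < c ⟨0, by omega⟩) (hmono : StrictMono c)
    (hc1 : c ⟨0, by omega⟩ < 1)
    (xstar : Fin N → ℝ)
    (hxstar : xstar = fun j =>
      if j = (⟨0, by omega⟩ : Fin N) then Real.log (N / c ⟨0, by omega⟩) else 0) :
    0 < xstar ⟨0, by omega⟩ ∧
      ∀ x : Fin N → ℝ, (∀ j, 0 ≤ x j) →
        N * Real.exp (-∑ j, xstar j) + ∑ j, c j * xstar j ≤
          N * Real.exp (-∑ j, x j) + ∑ j, c j * x j := by
  set i0 : Fin N := ⟨0, by omega⟩ with hi0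
  set c1 : ℝ := c i0 with hc1def
  have hN1 : (1 : ℝ) < N := by exact_mod_cast hN.trans_lt' (by norm_num)
  have hNc : 1 < (N : ℝ) / c1 := by
    rw [lt_div_iff₀ hc0]; nlinarith
  have hL : Real.log ((N : ℝ) / c1) = Real.log ((N : ℝ) / c1) := rfl
  have hlogpos : 0 < Real.log ((N : ℝ) / c1) := Real.log_pos hNc
  subst hxstar
  have hsum1 : ∑ j, (if j = i0 then Real.log ((N : ℝ) / c1) else 0) =
      Real.log ((N : ℝ) / c1) := by
    simp [Finset.sum_ite_eq']
  have hsum2 : ∑ j, c j * (if j = i0 then Real.log ((N : ℝ) / c1) else 0) =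
      c1 * Real.log ((N : ℝ) / c1) := by
    rw [Finset.sum_eq_single i0]
    · simp [hc1def]
    · intro b _ hb; simp [hb]
    · simp
  constructor
  · simpa using hlogpos
  intro x hx
  simp only [hsum1, hsum2]
  have hexp : Real.exp (-Real.log ((N : ℝ) / c1)) = c1 / N := by
    rw [Real.exp_neg, Real.exp_log (by positivity)]
    field_simp
  rw [hexp]
  have hNe : (N : ℝ) ≠ 0 := by positivity
  have h1 : (N : ℝ) * (c1 / N) = c1 := by field_simp
  rw [h1]
  -- lower bound on cost sum
  set S : ℝ := ∑ j, x j with hS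
  have hcost : c1 * S ≤ ∑ j, c j * x j := by
    rw [hS, Finset.mul_sum]
    apply Finset.sum_le_sum
    intro j _
    have : c1 ≤ c j := hmono.monotone (by exact Fin.mk_le_of_le_val (Nat.zero_le _))
    exact mul_le_mul_of_nonneg_right this (hx j)
  have key : c1 + c1 * Real.log ((N : ℝ) / c1) ≤ N * Real.exp (-S) + c1 * S := by
    have h2 := Real.add_one_le_exp (Real.log ((N : ℝ) / c1) - S)
    have h3 : Real.exp (Real.log ((N : ℝ) / c1) - S) =
        ((N : ℝ) / c1) * Real.exp (-S) := by
      rw [sub_eq_add_neg, Real.exp_add, Real.exp_log (by positivity)]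
    rw [h3] at h2
    have h4 := mul_le_mul_of_nonneg_left h2 hc0.le
    have hc1ne : c1 ≠ 0 := ne_of_gt hc0
    have : c1 * ((N : ℝ) / c1 * Real.exp (-S)) = N * Real.exp (-S) := by
      field_simp
    nlinarith [this]
  linarith
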